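/- The number of rooted labeled forests on a vertex set of size m + n, with a distinguished set of m roots (one root per tree, every tree containing exactly one root), equals m·(m+n)^(n-1). -/

import Mathlib

open Finset

lemma abel_sum (m n : ℕ) (hn : 1 ≤ n) :
    ∑ k ∈ range (n+1), n.choose k *
      (m ^ k * (if k = 0 then 0 else if k = n then 1 else k * n ^ (n - k - 1)))
      = m * (m + n) ^ (n - 1) := by
  have hrhs : m * (m + n) ^ (n - 1)
      = ∑ j ∈ range n, m * (m ^ j * n ^ (n - 1 - j) * (n-1).choose j) := by
    rw [add_pow m n (n-1), Finset.mul_sum]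
    have h1 : n - 1 + 1 = n := by omega
    rw [h1]
    simp [Nat.cast_id]
  rw [hrhs, Finset.sum_range_succ']
  have h0 : n.choose 0 * (m ^ 0 * (if (0:ℕ) = 0 then (0:ℕ) else if 0 = n then 1 else 0 * n ^ (n - 0 - 1))) = 0 := by simp
  rw [h0, add_zero]
  refine Finset.sum_congr rfl fun j hj => ?_
  rw [Finset.mem_range] at hj
  have hj0 : j + 1 ≠ 0 := by omega
  rw [if_neg hj0]
  by_cases hjn : j + 1 = n
  · rw [if_pos hjn]
    have hj' : j = n - 1 := by omega
    subst hj'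
    rw [hjn, Nat.choose_self, Nat.choose_self]
    have : n - 1 - (n-1) = 0 := by omega
    rw [this]
    ring_nf
    rw [← pow_succ' m (n-1)]
    congr 1
    omega
  · rw [if_neg hjn]
    -- LHS: C(n, j+1) * (m^(j+1) * ((j+1) * n^(n-j-2)))
    -- RHS: m * (m^j * n^(n-1-j) * C(n-1,j))
    have key : n.choose (j+1) * (j+1) = n * (n-1).choose j := by
      have := Nat.add_one_mul_choose_eq (n-1) j
      have h1 : n - 1 + 1 = n := by omega
      rw [h1] at this
      simpa using this.symm
    have hexp : n ^ (n - 1 - j) = n * n ^ (n - (j+1) - 1) := by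
      have h2 : n - 1 - j = (n - (j+1) - 1) + 1 := by omega
      rw [h2, pow_succ']
    calc n.choose (j+1) * (m ^ (j+1) * ((j+1) * n ^ (n - (j+1) - 1)))
        = (n.choose (j+1) * (j+1)) * m ^ (j+1) * n ^ (n - (j+1) - 1) := by ring
      _ = (n * (n-1).choose j) * m ^ (j+1) * n ^ (n - (j+1) - 1) := by rw [key]
      _ = m * (m ^ j * n ^ (n - 1 - j) * (n-1).choose j) := by
          rw [hexp, pow_succ']; ring

section defs
variable {V : Type} [DecidableEq V] [Fintype V]

/-- A "rooted forest structure": `p` fixes `R` and every vertex reaches `R` under iteration. -/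
def Good (R : Finset V) (p : V → V) : Prop :=
  (∀ r ∈ R, p r = r) ∧ ∀ v, ∃ k, p^[k] v ∈ R

/-- restriction of `p` to the non-roots, with new root set `A`. -/
def qOf (R A : Finset V) (p : V → V) : ↥(Rᶜ) → ↥(Rᶜ) := fun v =>
  if h : p v.1 ∈ Rᶜ ∧ v.1 ∉ A then ⟨p v.1, h.1⟩ else v

/-- reassembling `p` from the top map `f` and the restriction `q`. -/
def pOf (R A : Finset V) (f : ↥A → ↥R) (q : ↥(Rᶜ) → ↥(Rᶜ)) : V → V := fun v =>
  if h : v ∈ Rᶜ then (if hA : v ∈ A then (f ⟨v, hA⟩ : V) else (q ⟨v, h⟩ : V)) else v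

lemma qOf_iter (R A : Finset V) (p : V → V)
    (hchar : ∀ v ∈ Rᶜ, (p v ∈ R ↔ v ∈ A)) :
    ∀ (k : ℕ) (v : ↥(Rᶜ)), p^[k] v.1 ∈ R → ∃ j, ((qOf R A p)^[j] v).1 ∈ A := by
  intro k
  induction k with
  | zero =>
    intro v hv
    simp only [Function.iterate_zero_apply] at hv
    exact absurd hv (Finset.mem_compl.mp v.2)
  | succ k ih =>
    intro v hv
    by_cases hA : v.1 ∈ A
    · exact ⟨0, hA⟩
    · have hpv : p v.1 ∉ R := by
        rw [hchar v.1 v.2]; exact hA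
      have hq : qOf R A p v = ⟨p v.1, Finset.mem_compl.mpr hpv⟩ := by
        rw [qOf, dif_pos ⟨Finset.mem_compl.mpr hpv, hA⟩]
      rw [Function.iterate_succ_apply] at hv
      obtain ⟨j, hj⟩ := ih ⟨p v.1, Finset.mem_compl.mpr hpv⟩ hv
      exact ⟨j + 1, by rw [Function.iterate_succ_apply, hq]; exact hj⟩

lemma pOf_iter (R A : Finset V) (f : ↥A → ↥R) (q : ↥(Rᶜ) → ↥(Rᶜ)) :
    ∀ (k : ℕ) (w : ↥(Rᶜ)), (q^[k] w).1 ∈ A → ∃ j, (pOf R A f q)^[j] w.1 ∈ R := by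
  intro k
  induction k with
  | zero =>
    intro w hw
    simp only [Function.iterate_zero_apply] at hw
    refine ⟨1, ?_⟩
    have h1 : pOf R A f q w.1 = (f ⟨w.1, hw⟩ : V) := by
      rw [pOf, dif_pos w.2, dif_pos hw]
    simp only [Function.iterate_one, h1]
    exact (f ⟨w.1, hw⟩).2
  | succ k ih =>
    intro w hw
    by_cases hA : w.1 ∈ A
    · refine ⟨1, ?_⟩
      have h1 : pOf R A f q w.1 = (f ⟨w.1, hA⟩ : V) := by
        rw [pOf, dif_pos w.2, dif_pos hA]
      simp only [Function.iterate_one, h1]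
      exact (f ⟨w.1, hA⟩).2
    · have hp : pOf R A f q w.1 = (q w).1 := by
        rw [pOf, dif_pos w.2, dif_neg hA]
      rw [Function.iterate_succ_apply] at hw
      obtain ⟨j, hj⟩ := ih (q w) (by convert hw)
      refine ⟨j + 1, ?_⟩
      rw [Function.iterate_succ_apply, hp]
      exact hj

end defs

lemma nat_card_sigma {ι : Type*} [Fintype ι] (f : ι → Type*) [∀ i, Finite (f i)] :
    Nat.card (Σ i, f i) = ∑ i, Nat.card (f i) := by
  classical
  letI : ∀ i, Fintype (f i) := fun i => Fintype.ofFinite _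
  simp [Nat.card_eq_fintype_card, Fintype.card_sigma]

section cardT
variable {V : Type} [DecidableEq V] [Fintype V]

lemma card_T (R A : Finset V) (hA : A ⊆ Rᶜ) :
    Nat.card {p : V → V // Good R p ∧ (Rᶜ).filter (fun v => p v ∈ R) = A}
      = R.card ^ A.card *
        Nat.card {q : ↥(Rᶜ) → ↥(Rᶜ) //
          Good (Finset.univ.filter (fun v : ↥(Rᶜ) => v.1 ∈ A)) q} := by
  set A' : Finset ↥(Rᶜ) := Finset.univ.filter (fun v : ↥(Rᶜ) => v.1 ∈ A) with hA'
  have e : {p : V → V // Good R p ∧ (Rᶜ).filter (fun v => p v ∈ R) = A}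
      ≃ (↥A → ↥R) × {q : ↥(Rᶜ) → ↥(Rᶜ) // Good A' q} := by
    refine ⟨?_, ?_, ?_, ?_⟩
    · rintro ⟨p, hp, hfil⟩
      have hchar : ∀ v ∈ Rᶜ, (p v ∈ R ↔ v ∈ A) := by
        intro v hv
        rw [← hfil, Finset.mem_filter]
        tauto
      refine ⟨fun a => ⟨p a.1, ?_⟩, ⟨qOf R A p, ?_, ?_⟩⟩
      · exact (hchar a.1 (hA a.2)).mpr a.2
      · intro r hr
        rw [hA', Finset.mem_filter] at hr
        rw [qOf, dif_neg (by tauto)]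
      · intro v
        obtain ⟨k, hk⟩ := hp.2 v.1
        obtain ⟨j, hj⟩ := qOf_iter R A p hchar k v hk
        exact ⟨j, by rw [hA', Finset.mem_filter]; exact ⟨Finset.mem_univ _, hj⟩⟩
    · rintro ⟨f, q, hq⟩
      refine ⟨pOf R A f q, ⟨?_, ?_⟩, ?_⟩
      · intro r hr
        rw [pOf, dif_neg (by simpa using hr)]
      · intro v
        by_cases hv : v ∈ Rᶜ
        · obtain ⟨k, hk⟩ := hq.2 ⟨v, hv⟩
          rw [hA', Finset.mem_filter] at hk
          exact pOf_iter R A f q k ⟨v, hv⟩ hk.2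
        · exact ⟨0, by simpa using hv⟩
      · ext v
        rw [Finset.mem_filter]
        constructor
        · rintro ⟨hv, hpv⟩
          by_contra hvA
          rw [pOf, dif_pos hv, dif_neg hvA] at hpv
          exact Finset.mem_compl.mp (q ⟨v, hv⟩).2 hpv
        · intro hvA
          have hv : v ∈ Rᶜ := hA hvA
          refine ⟨hv, ?_⟩
          rw [pOf, dif_pos hv, dif_pos hvA]
          exact (f ⟨v, hvA⟩).2
    · rintro ⟨p, hp, hfil⟩
      ext v
      simp only [pOf]
      by_cases hv : v ∈ Rᶜ
      · rw [dif_pos hv]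
        by_cases hvA : v ∈ A
        · rw [dif_pos hvA]
        · rw [dif_neg hvA, qOf]
          have hpv : p v ∈ Rᶜ := by
            rw [Finset.mem_compl]
            intro hc
            exact hvA (by rw [← hfil, Finset.mem_filter]; exact ⟨hv, hc⟩)
          rw [dif_pos ⟨hpv, hvA⟩]
      · rw [dif_neg hv]
        exact (hp.1 v (by simpa using hv)).symm
    · rintro ⟨f, q, hq⟩
      have hchar : ∀ (v : V) (hv : v ∈ Rᶜ), v ∉ A → pOf R A f q v = (q ⟨v, hv⟩).1 := by
        intro v hv hvA
        rw [pOf, dif_pos hv, dif_neg hvA]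
      refine Prod.ext ?_ ?_
      · funext a
        apply Subtype.ext
        show pOf R A f q a.1 = _
        rw [pOf, dif_pos (hA a.2), dif_pos a.2]
      · apply Subtype.ext
        funext v
        show qOf R A (pOf R A f q) v = q v
        by_cases hvA : v.1 ∈ A
        · rw [qOf, dif_neg (by tauto)]
          have : v ∈ A' := by rw [hA', Finset.mem_filter]; exact ⟨Finset.mem_univ _, hvA⟩
          exact (hq.1 v this).symm
        · have h1 : pOf R A f q v.1 = (q ⟨v.1, v.2⟩).1 := hchar v.1 v.2 hvA
          have h2 : pOf R A f q v.1 ∈ Rᶜ := by rw [h1]; exact (q _).2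
          rw [qOf, dif_pos ⟨h2, hvA⟩]
          apply Subtype.ext
          simpa using h1
  rw [Nat.card_congr e, Nat.card_prod, Nat.card_fun]
  congr 2
  · rw [Nat.card_eq_fintype_card, Fintype.card_coe]
  · rw [Nat.card_eq_fintype_card, Fintype.card_coe]

end cardT

theorem card_good : ∀ (n : ℕ) (V : Type) [Fintype V] [DecidableEq V] (R : Finset V),
    Rᶜ.card = n →
    Nat.card {p : V → V // Good R p} =
      if n = 0 then 1 else R.card * (Fintype.card V) ^ (n - 1) := by
  intro n
  induction n using Nat.strong_induction_on with
  | _ n IH =>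
  intro V _ _ R hn
  by_cases h0 : n = 0
  · subst h0
    rw [if_pos rfl]
    have hR : R = Finset.univ := by
      rw [Finset.eq_univ_iff_forall]
      intro v
      by_contra hv
      have : v ∈ Rᶜ := Finset.mem_compl.mpr hv
      rw [Finset.card_eq_zero.mp hn] at this
      exact Finset.notMem_empty _ this
    subst hR
    haveI : Unique {p : V → V // Good Finset.univ p} := by
      refine ⟨⟨⟨id, fun r _ => rfl, fun v => ⟨0, Finset.mem_univ _⟩⟩⟩, ?_⟩
      rintro ⟨p, hp⟩
      apply Subtype.ext
      funext v
      exact (hp.1 v (Finset.mem_univ _))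
    exact Nat.card_unique
  · rw [if_neg h0]
    have hn1 : 1 ≤ n := Nat.one_le_iff_ne_zero.mpr h0
    -- Sigma decomposition over the set A of non-roots mapping directly into R
    have E1 : {p : V → V // Good R p} ≃
        Σ A : {A : Finset V // A ∈ (Rᶜ).powerset},
          {p : V → V // Good R p ∧ (Rᶜ).filter (fun v => p v ∈ R) = A.1} :=
      (Equiv.sigmaFiberEquiv (fun p : {p : V → V // Good R p} =>
        (⟨(Rᶜ).filter (fun v => p.1 v ∈ R),
          Finset.mem_powerset.mpr (Finset.filter_subset _ _)⟩ :
            {A : Finset V // A ∈ (Rᶜ).powerset}))).symm.trans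
      (Equiv.sigmaCongrRight (fun b =>
        ⟨fun a => ⟨a.1.1, a.1.2, congrArg Subtype.val a.2⟩,
         fun p => ⟨⟨p.1, p.2.1⟩, Subtype.ext p.2.2⟩,
         fun a => rfl, fun p => rfl⟩))
    rw [Nat.card_congr E1, nat_card_sigma]
    rw [Finset.sum_coe_sort ((Rᶜ).powerset)
      (fun A => Nat.card {p : V → V // Good R p ∧ (Rᶜ).filter (fun v => p v ∈ R) = A})]
    have hVcard : Fintype.card V = R.card + n := by
      rw [← hn, ← Finset.card_add_card_compl R]
    have key : ∀ A ∈ (Rᶜ).powerset,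
        Nat.card {p : V → V // Good R p ∧ (Rᶜ).filter (fun v => p v ∈ R) = A}
          = R.card ^ A.card *
            (if A.card = 0 then 0 else if A.card = n then 1
              else A.card * n ^ (n - A.card - 1)) := by
      intro A hA
      rw [Finset.mem_powerset] at hA
      have hAcard : A.card ≤ n := by rw [← hn]; exact Finset.card_le_card hA
      set A' : Finset ↥(Rᶜ) := Finset.univ.filter (fun v : ↥(Rᶜ) => v.1 ∈ A) with hA'def
      have hA'card : A'.card = A.card := by
        apply Finset.card_bij (fun (a : ↥(Rᶜ)) _ => a.1)
        · intro a ha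
          rw [hA'def, Finset.mem_filter] at ha
          exact ha.2
        · intro a _ b _ h
          exact Subtype.ext h
        · intro b hb
          exact ⟨⟨b, hA hb⟩, by rw [hA'def, Finset.mem_filter]; exact ⟨Finset.mem_univ _, hb⟩, rfl⟩
      rw [card_T R A hA]
      congr 1
      by_cases hk0 : A.card = 0
      · rw [if_pos hk0]
        rw [Finset.card_eq_zero] at hk0
        subst hk0
        have hne : Nonempty ↥(Rᶜ) := by
          obtain ⟨v, hv⟩ := Finset.card_pos.mp (show 0 < (Rᶜ).card by omega)
          exact ⟨⟨v, hv⟩⟩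
        haveI : IsEmpty {q : ↥(Rᶜ) → ↥(Rᶜ) //
            Good (Finset.univ.filter (fun v : ↥(Rᶜ) => v.1 ∈ (∅ : Finset V))) q} := by
          refine ⟨?_⟩
          rintro ⟨q, hq⟩
          obtain ⟨k, hk⟩ := hq.2 hne.some
          rw [Finset.mem_filter] at hk
          exact absurd hk.2 (Finset.notMem_empty _)
        exact Nat.card_of_isEmpty
      · rw [if_neg hk0]
        have hklt : n - A.card < n := by omega
        have hcompl : (A')ᶜ.card = n - A.card := by
          rw [Finset.card_compl, hA'card, Fintype.card_coe, hn]
        rw [IH (n - A.card) hklt ↥(Rᶜ) A' hcompl, hA'card, Fintype.card_coe, hn]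
        by_cases hkn : A.card = n
        · rw [if_pos hkn, if_pos (by omega)]
        · rw [if_neg hkn, if_neg (by omega)]
    rw [Finset.sum_congr rfl key]
    have := Finset.sum_powerset_apply_card
      (fun k => R.card ^ k * (if k = 0 then 0 else if k = n then 1 else k * n ^ (n - k - 1)))
      (x := (Rᶜ : Finset V))
    rw [hn] at this
    rw [this]
    simp only [smul_eq_mul]
    rw [abel_sum R.card n hn1, hVcard]


section graphside
variable {V : Type} [DecidableEq V] [Fintype V] {R : Finset V} {p : V → V}

noncomputable def depth (hp : Good R p) (v : V) : ℕ :=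
  Nat.find (hp.2 v)

lemma depth_spec (hp : Good R p) (v : V) : p^[depth hp v] v ∈ R :=
  Nat.find_spec (hp.2 v)

lemma depth_eq_zero (hp : Good R p) {v : V} (hv : v ∈ R) : depth hp v = 0 := by
  rw [depth, Nat.find_eq_zero]
  simpa using hv

lemma mem_of_depth_eq_zero (hp : Good R p) {v : V} (hv : depth hp v = 0) : v ∈ R := by
  have := depth_spec hp v
  rwa [hv, Function.iterate_zero_apply] at this

lemma pv_ne (hp : Good R p) {v : V} (hv : v ∉ R) : p v ≠ v := by
  intro h
  have h2 : ∀ k, p^[k] v = v := fun k => Function.iterate_fixed h k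
  have := depth_spec hp v
  rw [h2] at this
  exact hv this

lemma depth_succ (hp : Good R p) {v : V} (hv : v ∉ R) :
    depth hp v = depth hp (p v) + 1 := by
  have h1 : depth hp v ≠ 0 := fun h => hv (mem_of_depth_eq_zero hp h)
  have h2 : depth hp (p v) ≤ depth hp v - 1 := by
    apply Nat.find_min'
    have := depth_spec hp v
    rwa [show depth hp v = (depth hp v - 1) + 1 by omega, Function.iterate_succ_apply] at this
  have h3 : depth hp v ≤ depth hp (p v) + 1 := by
    apply Nat.find_min'
    rw [Function.iterate_succ_apply]
    exact depth_spec hp (p v)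
  omega

noncomputable def root (hp : Good R p) (v : V) : V :=
  p^[depth hp v] v

lemma root_mem (hp : Good R p) (v : V) : root hp v ∈ R := depth_spec hp v

lemma root_eq_self (hp : Good R p) {v : V} (hv : v ∈ R) : root hp v = v := by
  rw [root, depth_eq_zero hp hv, Function.iterate_zero_apply]

lemma root_p (hp : Good R p) {v : V} (hv : v ∉ R) : root hp (p v) = root hp v := by
  rw [root, root, depth_succ hp hv, Function.iterate_succ_apply]

def forestGraph (p : V → V) : SimpleGraph V :=
  SimpleGraph.fromRel (fun a b => p a = b)

lemma forestGraph_adj {a b : V} :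
    (forestGraph p).Adj a b ↔ a ≠ b ∧ (p a = b ∨ p b = a) := by
  rw [forestGraph, SimpleGraph.fromRel_adj]

lemma adj_parent (hp : Good R p) {v : V} (hv : v ∉ R) :
    (forestGraph p).Adj v (p v) :=
  forestGraph_adj.mpr ⟨(pv_ne hp hv).symm, Or.inl rfl⟩

lemma adj_down (hp : Good R p) {a b : V} (hadj : (forestGraph p).Adj a b)
    (hd : depth hp b ≤ depth hp a) : p a = b := by
  rw [forestGraph_adj] at hadj
  obtain ⟨hne, h | h⟩ := hadj
  · exact h
  · exfalso
    by_cases hbR : b ∈ R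
    · exact hne ((hp.1 b hbR ▸ h).symm)
    · have := depth_succ hp hbR
      rw [h] at this
      omega

lemma root_eq_of_adj (hp : Good R p) {a b : V} (hadj : (forestGraph p).Adj a b) :
    root hp a = root hp b := by
  rw [forestGraph_adj] at hadj
  obtain ⟨hne, h | h⟩ := hadj
  · have haR : a ∉ R := by
      intro haR
      exact hne (hp.1 a haR ▸ h)
    rw [← root_p hp haR, h]
  · have hbR : b ∉ R := by
      intro hbR
      exact hne ((hp.1 b hbR ▸ h).symm)
    rw [← root_p hp hbR, h]

lemma root_eq_of_reachable (hp : Good R p) {a b : V}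
    (h : (forestGraph p).Reachable a b) : root hp a = root hp b := by
  obtain ⟨w⟩ := h
  induction w with
  | nil => rfl
  | cons hadj w ih => exact (root_eq_of_adj hp hadj).trans ih

lemma reachable_root (hp : Good R p) (v : V) :
    (forestGraph p).Reachable v (root hp v) := by
  suffices h : ∀ (k : ℕ) (v : V), depth hp v ≤ k → (forestGraph p).Reachable v (root hp v) by
    exact h (depth hp v) v le_rfl
  intro k
  induction k with
  | zero =>
    intro v hv
    rw [root, Nat.le_zero.mp hv, Function.iterate_zero_apply]
  | succ k ih =>
    intro v hv
    by_cases hvR : v ∈ R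
    · rw [root_eq_self hp hvR]
    · have h1 : depth hp (p v) ≤ k := by
        have := depth_succ hp hvR
        omega
      have h2 := ih (p v) h1
      rw [root_p hp hvR] at h2
      exact (adj_parent hp hvR).reachable.trans h2

end graphside

section acyclic
variable {V : Type} [DecidableEq V] [Fintype V] {R : Finset V} {p : V → V}

lemma exists_last_edge {G : SimpleGraph V} :
    ∀ {x u : V} (q : G.Walk x u), ¬ q.Nil →
      ∃ y, G.Adj y u ∧ s(y, u) ∈ q.edges ∧ y ∈ q.support := by
  intro x u q
  induction q with
  | nil => intro h; exact absurd SimpleGraph.Walk.Nil.nil h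
  | @cons a b u hadj q' ih =>
    intro _
    by_cases hq' : q'.Nil
    · have hbu : b = u := SimpleGraph.Walk.eq_of_length_eq_zero
        (SimpleGraph.Walk.nil_iff_length_eq.mp hq')
      subst hbu
      exact ⟨a, hadj, by simp, by simp⟩
    · obtain ⟨y, h1, h2, h3⟩ := ih hq'
      exact ⟨y, h1, by simp [h2], by simp [h3]⟩

lemma forestGraph_isAcyclic (hp : Good R p) : (forestGraph p).IsAcyclic := by
  intro v c hc
  -- pick a vertex of maximal depth on the cycle
  obtain ⟨u, hu, hmax⟩ := Finset.exists_max_image c.support.toFinset (depth hp)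
    ⟨v, List.mem_toFinset.mpr c.start_mem_support⟩
  rw [List.mem_toFinset] at hu
  have hc' := hc.rotate hu
  set c' := c.rotate u hu with hc'def
  have hmem : ∀ w ∈ c'.support, w ∈ c.support := by
    intro w hw
    rw [c'.support_eq_cons] at hw
    rcases List.mem_cons.mp hw with h | h
    · exact h ▸ hu
    · have := (SimpleGraph.Walk.support_rotate c u hu).mem_iff.mp h
      exact List.mem_of_mem_tail this
  have hmax' : ∀ w ∈ c'.support, depth hp w ≤ depth hp u := by
    intro w hw
    exact hmax w (List.mem_toFinset.mpr (hmem w hw))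
  clear_value c'
  clear hmax hc
  -- destructure the cycle
  cases hcc : c' with
  | nil => exact hc'.ne_nil hcc
  | @cons _ x _ hadj q =>
    rw [hcc] at hc' hmax'
    have hxsupp : x ∈ (SimpleGraph.Walk.cons hadj q).support := by
      simp [SimpleGraph.Walk.support_cons, q.start_mem_support]
    have hpux : p u = x :=
      adj_down hp hadj (hmax' x hxsupp)
    have hqnil : ¬ q.Nil := by
      rw [SimpleGraph.Walk.nil_iff_length_eq]
      have := hc'.three_le_length
      rw [SimpleGraph.Walk.length_cons] at this
      omega
    obtain ⟨y, hyadj, hyedge, hysupp⟩ := exists_last_edge q hqnil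
    have hysupp' : y ∈ (SimpleGraph.Walk.cons hadj q).support := by
      simp [SimpleGraph.Walk.support_cons, hysupp]
    have hpuy : p u = y :=
      adj_down hp hyadj.symm (hmax' y hysupp')
    have hxy : x = y := hpux ▸ hpuy
    subst hxy
    have hnodup := hc'.edges_nodup
    rw [SimpleGraph.Walk.edges_cons] at hnodup
    rw [List.nodup_cons] at hnodup
    exact hnodup.1 (by rwa [Sym2.eq_swap] at hyedge)

lemma forestGraph_comp (hp : Good R p) :
    ∀ c : (forestGraph p).ConnectedComponent,
      ∃! r : V, r ∈ R ∧ (forestGraph p).connectedComponentMk r = c := by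
  intro c
  induction c using SimpleGraph.ConnectedComponent.ind with
  | _ v =>
  refine ⟨root hp v, ⟨root_mem hp v, ?_⟩, ?_⟩
  · exact (SimpleGraph.ConnectedComponent.sound (reachable_root hp v)).symm
  · rintro r ⟨hrR, hr⟩
    have hreach : (forestGraph p).Reachable r v :=
      (SimpleGraph.ConnectedComponent.exact hr)
    have := root_eq_of_reachable hp hreach
    rw [root_eq_self hp hrR] at this
    exact this

end acyclic

section reverse
variable {V : Type} [DecidableEq V] [Fintype V] {R : Finset V}
variable (G : SimpleGraph V)
variable (hG2 : ∀ c : G.ConnectedComponent, ∃! r : V, r ∈ R ∧ G.connectedComponentMk r = c)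

noncomputable def groot (v : V) : V :=
  (hG2 (G.connectedComponentMk v)).exists.choose

lemma groot_spec (v : V) :
    groot G hG2 v ∈ R ∧ G.connectedComponentMk (groot G hG2 v) = G.connectedComponentMk v :=
  (hG2 (G.connectedComponentMk v)).exists.choose_spec

lemma groot_unique {v r : V} (hr : r ∈ R)
    (h : G.connectedComponentMk r = G.connectedComponentMk v) : r = groot G hG2 v := by
  obtain ⟨r₀, _, hu⟩ := hG2 (G.connectedComponentMk v)
  rw [hu r ⟨hr, h⟩, hu (groot G hG2 v) ⟨(groot_spec G hG2 v).1, (groot_spec G hG2 v).2⟩]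

lemma reachable_groot (v : V) : G.Reachable v (groot G hG2 v) :=
  (SimpleGraph.ConnectedComponent.exact (groot_spec G hG2 v).2).symm

noncomputable def gpath (v : V) : G.Path v (groot G hG2 v) :=
  (reachable_groot G hG2 v).some.toPath

noncomputable def gp (v : V) : V :=
  if v ∈ R then v else ((gpath G hG2 v) : G.Walk v (groot G hG2 v)).getVert 1

lemma groot_eq_self {v : V} (hv : v ∈ R) : groot G hG2 v = v :=
  (groot_unique G hG2 hv rfl).symm

lemma ne_groot {v : V} (hv : v ∉ R) : v ≠ groot G hG2 v :=
  fun h => hv (h ▸ (groot_spec G hG2 v).1)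

lemma gpath_not_nil {v : V} (hv : v ∉ R) :
    ¬ ((gpath G hG2 v) : G.Walk v (groot G hG2 v)).Nil :=
  SimpleGraph.Walk.not_nil_of_ne (ne_groot G hG2 hv)

lemma gp_adj {v : V} (hv : v ∉ R) : G.Adj v (gp G hG2 v) := by
  rw [gp, if_neg hv]
  have h0 : 0 < ((gpath G hG2 v) : G.Walk v (groot G hG2 v)).length :=
    SimpleGraph.Walk.not_nil_iff_lt_length.mp (gpath_not_nil G hG2 hv)
  have := ((gpath G hG2 v) : G.Walk v (groot G hG2 v)).adj_getVert_succ h0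
  rwa [SimpleGraph.Walk.getVert_zero] at this

lemma path_eq (hG1 : G.IsAcyclic) {v : V} (w : G.Walk v (groot G hG2 v)) (hw : w.IsPath) :
    w = (gpath G hG2 v : G.Walk v (groot G hG2 v)) :=
  congrArg Subtype.val (SimpleGraph.IsAcyclic.path_unique hG1 ⟨w, hw⟩ (gpath G hG2 v))

lemma gp_step (hG1 : G.IsAcyclic) {v : V} (hv : v ∉ R) :
    groot G hG2 (gp G hG2 v) = groot G hG2 v ∧
    ((gpath G hG2 (gp G hG2 v)) : G.Walk (gp G hG2 v) (groot G hG2 (gp G hG2 v))).length + 1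
      = ((gpath G hG2 v) : G.Walk v (groot G hG2 v)).length := by
  obtain ⟨x, hadj, t, hcons⟩ :=
    SimpleGraph.Walk.exists_eq_cons_of_ne (ne_groot G hG2 hv)
      (gpath G hG2 v : G.Walk v (groot G hG2 v))
  have hx : gp G hG2 v = x := by
    rw [gp, if_neg hv, hcons, SimpleGraph.Walk.getVert_cons_succ, SimpleGraph.Walk.getVert_zero]
  have hmk : G.connectedComponentMk v = G.connectedComponentMk x :=
    SimpleGraph.ConnectedComponent.sound hadj.reachable
  have hroots : groot G hG2 x = groot G hG2 v := by
    refine (groot_unique G hG2 (groot_spec G hG2 v).1 ?_).symm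
    rw [(groot_spec G hG2 v).2, hmk]
  have htpath : t.IsPath := by
    have := (gpath G hG2 v).2
    rw [hcons] at this
    exact this.of_cons
  have ht' : (t.copy rfl hroots.symm).IsPath := (SimpleGraph.Walk.isPath_copy _ _ _).mpr htpath
  have := path_eq G hG2 hG1 (t.copy rfl hroots.symm) ht'
  rw [hx]
  refine ⟨hroots, ?_⟩
  rw [← this, SimpleGraph.Walk.length_copy, hcons, SimpleGraph.Walk.length_cons]

lemma gp_good (hG1 : G.IsAcyclic) : Good R (gp G hG2) := by
  constructor
  · intro r hr
    rw [gp, if_pos hr]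
  · intro v
    suffices h : ∀ (ℓ : ℕ) (v : V),
        ((gpath G hG2 v) : G.Walk v (groot G hG2 v)).length ≤ ℓ →
        ∃ k, (gp G hG2)^[k] v ∈ R by
      exact h _ v le_rfl
    intro ℓ
    induction ℓ with
    | zero =>
      intro v hlen
      by_cases hv : v ∈ R
      · exact ⟨0, hv⟩
      · exact absurd hlen (by
          have := SimpleGraph.Walk.not_nil_iff_lt_length.mp (gpath_not_nil G hG2 hv)
          omega)
    | succ ℓ ih =>
      intro v hlen
      by_cases hv : v ∈ R
      · exact ⟨0, hv⟩
      · obtain ⟨_, hstep⟩ := gp_step G hG2 hG1 hv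
        obtain ⟨k, hk⟩ := ih (gp G hG2 v) (by omega)
        exact ⟨k + 1, by rwa [Function.iterate_succ_apply]⟩

end reverse

section roundtrips
variable {V : Type} [DecidableEq V] [Fintype V] {R : Finset V} {p : V → V}

lemma loop_path_support {G : SimpleGraph V} {v : V} {w : G.Walk v v} (h : w.IsPath) :
    w.support = [v] := by
  cases w with
  | nil => simp
  | cons hadj q =>
    rw [SimpleGraph.Walk.cons_isPath_iff] at h
    exact absurd q.end_mem_support h.2

lemma forestGraph_gp (G : SimpleGraph V)
    (hG2 : ∀ c : G.ConnectedComponent, ∃! r : V, r ∈ R ∧ G.connectedComponentMk r = c)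
    (hG1 : G.IsAcyclic) : forestGraph (gp G hG2) = G := by
  ext a b
  rw [forestGraph_adj]
  constructor
  · rintro ⟨hne, h | h⟩
    · by_cases ha : a ∈ R
      · rw [gp, if_pos ha] at h
        exact absurd h hne
      · have := gp_adj G hG2 ha
        rwa [h] at this
    · by_cases hb : b ∈ R
      · rw [gp, if_pos hb] at h
        exact absurd h.symm hne
      · have := gp_adj G hG2 hb
        rw [h] at this
        exact this.symm
  · intro hadj
    refine ⟨hadj.ne, ?_⟩
    by_cases hmem : a ∈ ((gpath G hG2 b) : G.Walk b (groot G hG2 b)).support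
    · right
      have hb : b ∉ R := by
        intro hb
        have hgb : groot G hG2 b = b := groot_eq_self G hG2 hb
        have hsupp := loop_path_support
          ((SimpleGraph.Walk.isPath_copy _ rfl hgb).mpr (gpath G hG2 b).2)
        rw [SimpleGraph.Walk.support_copy] at hsupp
        rw [hsupp] at hmem
        exact hadj.ne (List.mem_singleton.mp hmem)
      set w := ((gpath G hG2 b) : G.Walk b (groot G hG2 b)) with hw
      have hT : (w.takeUntil a hmem).IsPath := (gpath G hG2 b).2.takeUntil hmem
      have hsingleP : (SimpleGraph.Walk.cons hadj.symm SimpleGraph.Walk.nil :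
          G.Walk b a).IsPath := by
        rw [SimpleGraph.Walk.cons_isPath_iff]
        exact ⟨SimpleGraph.Walk.IsPath.nil, by simp [hadj.ne.symm]⟩
      have hsingle : w.takeUntil a hmem = SimpleGraph.Walk.cons hadj.symm SimpleGraph.Walk.nil :=
        congrArg Subtype.val
          (SimpleGraph.IsAcyclic.path_unique hG1 ⟨_, hT⟩ ⟨_, hsingleP⟩)
      have hspec := SimpleGraph.Walk.take_spec w hmem
      rw [hsingle, SimpleGraph.Walk.cons_append, SimpleGraph.Walk.nil_append] at hspec
      rw [gp, if_neg hb, ← hw, ← hspec, SimpleGraph.Walk.getVert_cons_succ,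
        SimpleGraph.Walk.getVert_zero]
    · left
      have hmkab : G.connectedComponentMk a = G.connectedComponentMk b :=
        SimpleGraph.ConnectedComponent.sound hadj.reachable
      have ha : a ∉ R := by
        intro ha
        have : a = groot G hG2 b := groot_unique G hG2 ha hmkab
        rw [this] at hmem
        exact hmem (SimpleGraph.Walk.end_mem_support _)
      have hroots : groot G hG2 b = groot G hG2 a := by
        refine groot_unique G hG2 (groot_spec G hG2 b).1 ?_
        rw [(groot_spec G hG2 b).2, hmkab]
      have hQP : (SimpleGraph.Walk.cons hadj
          ((gpath G hG2 b) : G.Walk b (groot G hG2 b))).IsPath := by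
        rw [SimpleGraph.Walk.cons_isPath_iff]
        exact ⟨(gpath G hG2 b).2, hmem⟩
      have hQ'P : ((SimpleGraph.Walk.cons hadj
          ((gpath G hG2 b) : G.Walk b (groot G hG2 b))).copy rfl hroots).IsPath :=
        (SimpleGraph.Walk.isPath_copy _ rfl hroots).mpr hQP
      have heq := path_eq G hG2 hG1 _ hQ'P
      rw [gp, if_neg ha, ← heq, SimpleGraph.Walk.getVert_copy,
        SimpleGraph.Walk.getVert_cons_succ, SimpleGraph.Walk.getVert_zero]

noncomputable def iterWalkAux (hp : Good R p) :
    (k : ℕ) → (v : V) → depth hp v ≤ k → (forestGraph p).Walk v (root hp v)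
  | 0, v, h =>
    SimpleGraph.Walk.nil.copy rfl
      (root_eq_self hp (mem_of_depth_eq_zero hp (Nat.le_zero.mp h))).symm
  | k+1, v, h =>
    if hv : v ∈ R then SimpleGraph.Walk.nil.copy rfl (root_eq_self hp hv).symm
    else SimpleGraph.Walk.cons (adj_parent hp hv)
      ((iterWalkAux hp k (p v) (by have := depth_succ hp hv; omega)).copy rfl (root_p hp hv))

lemma iterWalk_support (hp : Good R p) :
    ∀ (k : ℕ) (v : V) (h : depth hp v ≤ k) (w : V),
      w ∈ (iterWalkAux hp k v h).support → depth hp w ≤ depth hp v := by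
  intro k
  induction k with
  | zero =>
    intro v h w hw
    rw [iterWalkAux, SimpleGraph.Walk.support_copy, SimpleGraph.Walk.support_nil] at hw
    rw [List.mem_singleton.mp hw]
  | succ k ih =>
    intro v h w hw
    rw [iterWalkAux] at hw
    by_cases hv : v ∈ R
    · rw [dif_pos hv, SimpleGraph.Walk.support_copy, SimpleGraph.Walk.support_nil] at hw
      rw [List.mem_singleton.mp hw]
    · rw [dif_neg hv, SimpleGraph.Walk.support_cons] at hw
      rcases List.mem_cons.mp hw with h1 | h1
      · rw [h1]
      · rw [SimpleGraph.Walk.support_copy] at h1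
        have := ih (p v) (by have := depth_succ hp hv; omega) w h1
        have h2 := depth_succ hp hv
        omega

lemma iterWalk_isPath (hp : Good R p) :
    ∀ (k : ℕ) (v : V) (h : depth hp v ≤ k), (iterWalkAux hp k v h).IsPath := by
  intro k
  induction k with
  | zero =>
    intro v h
    rw [iterWalkAux]
    exact (SimpleGraph.Walk.isPath_copy _ rfl _).mpr SimpleGraph.Walk.IsPath.nil
  | succ k ih =>
    intro v h
    rw [iterWalkAux]
    by_cases hv : v ∈ R
    · rw [dif_pos hv]
      exact (SimpleGraph.Walk.isPath_copy _ rfl _).mpr SimpleGraph.Walk.IsPath.nil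
    · rw [dif_neg hv]
      rw [SimpleGraph.Walk.cons_isPath_iff]
      constructor
      · exact (SimpleGraph.Walk.isPath_copy _ rfl _).mpr (ih (p v) _)
      · intro hmem
        rw [SimpleGraph.Walk.support_copy] at hmem
        have := iterWalk_support hp k (p v) _ v hmem
        have h2 := depth_succ hp hv
        omega

lemma iterWalk_getVert (hp : Good R p) (k : ℕ) (v : V) (h : depth hp v ≤ k)
    (hv : v ∉ R) : (iterWalkAux hp k v h).getVert 1 = p v := by
  cases k with
  | zero => exact absurd (mem_of_depth_eq_zero hp (Nat.le_zero.mp h)) hv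
  | succ k =>
    rw [iterWalkAux, dif_neg hv, SimpleGraph.Walk.getVert_cons_succ,
      SimpleGraph.Walk.getVert_zero]

lemma gp_forestGraph (hp : Good R p) :
    gp (forestGraph p) (forestGraph_comp hp) = p := by
  funext v
  by_cases hv : v ∈ R
  · rw [gp, if_pos hv]
    exact (hp.1 v hv).symm
  · have hroot : root hp v = groot (forestGraph p) (forestGraph_comp hp) v :=
      groot_unique _ _ (root_mem hp v)
        (SimpleGraph.ConnectedComponent.sound (reachable_root hp v)).symm
    have hP : ((iterWalkAux hp (depth hp v) v le_rfl).copy rfl hroot).IsPath :=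
      (SimpleGraph.Walk.isPath_copy _ rfl hroot).mpr (iterWalk_isPath hp _ v le_rfl)
    have heq := path_eq (forestGraph p) (forestGraph_comp hp) (forestGraph_isAcyclic hp) _ hP
    rw [gp, if_neg hv, ← heq, SimpleGraph.Walk.getVert_copy]
    exact iterWalk_getVert hp _ v le_rfl hv

noncomputable def mainEquiv (R : Finset V) :
    {G : SimpleGraph V // G.IsAcyclic ∧ ∀ c : G.ConnectedComponent,
        ∃! r : V, r ∈ R ∧ G.connectedComponentMk r = c}
      ≃ {p : V → V // Good R p} where
  toFun G := ⟨gp G.1 G.2.2, gp_good G.1 G.2.2 G.2.1⟩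
  invFun p := ⟨forestGraph p.1, forestGraph_isAcyclic p.2, forestGraph_comp p.2⟩
  left_inv G := Subtype.ext (forestGraph_gp G.1 G.2.2 G.2.1)
  right_inv p := Subtype.ext (gp_forestGraph p.2)

end roundtrips

/-- The number of rooted labeled forests on a vertex set of size `m + n` with a
distinguished root set `R` of size `m` (each connected component containing
exactly one root) equals `m (m+n)^(n-1)`, for `n ≥ 1`. -/
theorem rooted_forests_count (m n : ℕ) (hn : 1 ≤ n)
    (R : Finset (Fin (m + n))) (hR : R.card = m) :
    Nat.card {G : SimpleGraph (Fin (m + n)) //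
        G.IsAcyclic ∧ ∀ c : G.ConnectedComponent,
          ∃! r : Fin (m + n), r ∈ R ∧ G.connectedComponentMk r = c}
      = m * (m + n) ^ (n - 1) := by
  classical
  have hcompl : (Rᶜ : Finset (Fin (m + n))).card = n := by
    rw [Finset.card_compl, hR, Fintype.card_fin]
    omega
  rw [Nat.card_congr (mainEquiv R), card_good n (Fin (m + n)) R hcompl,
    if_neg (by omega), hR, Fintype.card_fin]
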